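/- arXiv:1101.4370 — 2 statements merged into one kernel-verified Lean document; each statement's English description precedes it below -/
import Mathlib

section
/- The boundary values of φ̃ at the endpoints of its domain satisfy lim_{z→a, z∈ℂ∖((−∞,0]∪[a,∞))} φ̃(z) = 0 and lim_{z→0, z∈ℂ∖((−∞,0]∪[a,∞))} φ̃(z) = (1/2)·log c. -/
open Complex Finset Filter Topology

/-- `a := (1−√c)/(1+√c)`. -/
noncomputable def aconst (c : ℝ) : ℝ := (1 - Real.sqrt c) / (1 + Real.sqrt c)

/-- `b := (1+√c)/(1−√c)`. -/
noncomputable def bconst (c : ℝ) : ℝ := (1 + Real.sqrt c) / (1 - Real.sqrt c)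

/-- The principal branch of the complex square root. -/
noncomputable def csqrt (z : ℂ) : ℂ := z ^ (1 / 2 : ℂ)

/-- The function `φ(z)`, defined using principal branches. -/
noncomputable def phiFun (c : ℝ) (z : ℂ) : ℂ :=
  z * Complex.log ((csqrt ((bconst c : ℂ) * z - 1) + csqrt ((aconst c : ℂ) * z - 1)) /
      (csqrt ((bconst c : ℂ) * z - 1) - csqrt ((aconst c : ℂ) * z - 1))) -
  Complex.log ((csqrt (z - (aconst c : ℂ)) + csqrt (z - (bconst c : ℂ))) /
      (csqrt (z - (aconst c : ℂ)) - csqrt (z - (bconst c : ℂ))))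

/-- The function `φ̃(z)`, defined using principal branches. -/
noncomputable def phiTilde (c : ℝ) (z : ℂ) : ℂ :=
  z * Complex.log ((csqrt (1 - (aconst c : ℂ) * z) + csqrt (1 - (bconst c : ℂ) * z)) /
      (csqrt (1 - (aconst c : ℂ) * z) - csqrt (1 - (bconst c : ℂ) * z))) -
  Complex.log ((csqrt ((bconst c : ℂ) - z) + csqrt ((aconst c : ℂ) - z)) /
      (csqrt ((bconst c : ℂ) - z) - csqrt ((aconst c : ℂ) - z)))

/-- The domain `ℂ ∖ (−∞, b]` of `φ`. -/
def phiDom (c : ℝ) : Set ℂ := {z : ℂ | ¬(z.im = 0 ∧ z.re ≤ bconst c)}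

/-- The domain `ℂ ∖ ((−∞, 0] ∪ [a, ∞))` of `φ̃`. -/
def phiTildeDom (c : ℝ) : Set ℂ := {z : ℂ | ¬(z.im = 0 ∧ (z.re ≤ 0 ∨ aconst c ≤ z.re))}

/-- The function `φ′(z) = Log[(√(bz−1)+√(az−1))/(√(bz−1)−√(az−1))]`. -/
noncomputable def phiDeriv (c : ℝ) (z : ℂ) : ℂ :=
  Complex.log ((csqrt ((bconst c : ℂ) * z - 1) + csqrt ((aconst c : ℂ) * z - 1)) /
      (csqrt ((bconst c : ℂ) * z - 1) - csqrt ((aconst c : ℂ) * z - 1)))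

lemma csqrt_mul_self (z : ℂ) : csqrt z * csqrt z = z := by
  rcases eq_or_ne z 0 with rfl | hz
  · simp [csqrt, Complex.zero_cpow (by norm_num : (1/2 : ℂ) ≠ 0)]
  · rw [csqrt, ← Complex.cpow_add _ _ hz]
    norm_num

lemma csqrt_eq_zero {z : ℂ} : csqrt z = 0 ↔ z = 0 := by
  constructor
  · intro h
    have := csqrt_mul_self z
    rw [h, mul_zero] at this; exact this.symm
  · rintro rfl; simp [csqrt, Complex.zero_cpow (by norm_num : (1/2 : ℂ) ≠ 0)]

lemma csqrt_inj {u v : ℂ} (h : csqrt u = csqrt v) : u = v := by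
  rw [← csqrt_mul_self u, h, csqrt_mul_self]

lemma continuousAt_csqrt {z : ℂ} (h : 0 ≤ z.re ∨ z.im ≠ 0) : ContinuousAt csqrt z :=
  continuousAt_cpow_const_of_re_pos h (by norm_num)

lemma csqrt_ofReal {r : ℝ} (h : 0 ≤ r) : csqrt (r : ℂ) = (Real.sqrt r : ℂ) := by
  rw [csqrt, show (1/2 : ℂ) = ((1/2 : ℝ) : ℂ) by norm_num, ← Complex.ofReal_cpow h]
  norm_num [Real.sqrt_eq_rpow]

lemma norm_log_le (w : ℂ) : ‖Complex.log w‖ ≤ |Real.log ‖w‖| + Real.pi := by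
  unfold Complex.log
  refine le_trans (norm_add_le _ _) ?_
  simp [Complex.norm_real]
  exact Complex.abs_arg_le_pi w

lemma contAt_csqrt_affine {w v z : ℂ} (h : 0 ≤ (w - v*z).re ∨ (w - v*z).im ≠ 0) :
    ContinuousAt (fun x => csqrt (w - v*x)) z := by
  have := (continuousAt_csqrt h).comp (x := z) (g := csqrt)
    (f := fun x => w - v*x) (by fun_prop)
  exact this

section consts
variable {c : ℝ}

lemma sqrtc_pos (hc0 : 0 < c) : 0 < Real.sqrt c := Real.sqrt_pos.mpr hc0
lemma sqrtc_lt_one (hc0 : 0 < c) (hc1 : c < 1) : Real.sqrt c < 1 := by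
  nlinarith [Real.sq_sqrt hc0.le, Real.sqrt_nonneg c]

lemma aconst_pos (hc0 : 0 < c) (hc1 : c < 1) : 0 < aconst c := by
  have := sqrtc_pos hc0; have := sqrtc_lt_one hc0 hc1
  unfold aconst; apply div_pos <;> linarith

lemma aconst_lt_one (hc0 : 0 < c) (hc1 : c < 1) : aconst c < 1 := by
  have h1 := sqrtc_pos hc0; have h2 := sqrtc_lt_one hc0 hc1
  rw [aconst, div_lt_one (by linarith)]; linarith

lemma bconst_eq_inv : bconst c = (aconst c)⁻¹ := by
  rw [aconst, bconst, inv_div]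

lemma mul_aconst_bconst (hc0 : 0 < c) (hc1 : c < 1) : aconst c * bconst c = 1 := by
  have h1 := sqrtc_pos hc0; have h2 := sqrtc_lt_one hc0 hc1
  rw [aconst, bconst, div_mul_div_comm,
    div_eq_one_iff_eq (by nlinarith : (1 + Real.sqrt c) * (1 - Real.sqrt c) ≠ 0)]
  ring

lemma one_lt_bconst (hc0 : 0 < c) (hc1 : c < 1) : 1 < bconst c := by
  have h1 := sqrtc_pos hc0; have h2 := sqrtc_lt_one hc0 hc1
  rw [bconst, lt_div_iff₀ (by linarith)]; linarith

end consts

lemma real_log_bound {nN ba r : ℝ} (h1 : 1 ≤ nN) (h3 : nN ≤ 3) (hba : 0 < ba) (hr : 0 < r) :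
    |Real.log (nN^2/(ba*r))| ≤ Real.log 9 + |Real.log ba| + |Real.log r| := by
  rw [Real.log_div (by positivity) (by positivity), Real.log_mul hba.ne' hr.ne', Real.log_pow]
  have h0 : 0 ≤ Real.log nN := Real.log_nonneg h1
  have h3' : Real.log nN ≤ Real.log 3 := Real.log_le_log (by linarith) h3
  have h9 : Real.log 9 = 2 * Real.log 3 := by
    rw [show (9:ℝ) = 3^2 by norm_num, Real.log_pow]; push_cast; ring
  have hb1 := le_abs_self (Real.log ba); have hb2 := neg_abs_le (Real.log ba)
  have hr1 := le_abs_self (Real.log r); have hr2 := neg_abs_le (Real.log r)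
  rw [abs_le]
  constructor <;> push_cast <;> linarith

lemma real_tendsto (C : ℝ) :
    Tendsto (fun r : ℝ => r * (C + |Real.log r|)) (𝓝[>] (0:ℝ)) (𝓝 0) := by
  have h2 : Tendsto (fun r : ℝ => Real.log r * r) (𝓝[>] (0:ℝ)) (𝓝 0) := by
    simpa using _root_.tendsto_log_mul_rpow_nhdsGT_zero one_pos
  have hC : Tendsto (fun r : ℝ => r * C) (𝓝[>] (0:ℝ)) (𝓝 0) := by
    have : Tendsto (fun r : ℝ => r * C) (𝓝 (0:ℝ)) (𝓝 (0 * C)) :=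
      (continuous_id.mul continuous_const).tendsto 0
    simpa using this.mono_left nhdsWithin_le_nhds
  have hA : Tendsto (fun r : ℝ => r * C - Real.log r * r) (𝓝[>] (0:ℝ)) (𝓝 0) := by
    simpa using hC.sub h2
  apply hA.congr'
  filter_upwards [self_mem_nhdsWithin,
    eventually_nhdsWithin_of_eventually_nhds (eventually_lt_nhds one_pos)] with r hr hr1
  rw [abs_of_neg (Real.log_neg hr hr1)]; ring

/-- The boundary values `φ̃(a) = 0` and `φ̃(0) = (1/2) log c`, as limits within the domain. -/
theorem phiTilde_boundary_values (c : ℝ) (hc0 : 0 < c) (hc1 : c < 1) :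
    Tendsto (phiTilde c) (𝓝[phiTildeDom c] (aconst c : ℂ)) (𝓝 0) ∧
    Tendsto (phiTilde c) (𝓝[phiTildeDom c] (0 : ℂ)) (𝓝 ((Real.log c : ℂ) / 2)) := by
  constructor
  ·
    set A := aconst c with hA
    set B := bconst c with hB
    have hA0 : 0 < A := aconst_pos hc0 hc1
    have hA1 : A < 1 := aconst_lt_one hc0 hc1
    have hB1 : 1 < B := one_lt_bconst hc0 hc1
    have hABmul : A * B = 1 := mul_aconst_bconst hc0 hc1
    -- key nonzero values
    have h1A : (1 : ℂ) - (A:ℂ) * (A:ℂ) = ((1 - A*A : ℝ) : ℂ) := by push_cast; ring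
    have h1B : (1 : ℂ) - (B:ℂ) * (A:ℂ) = 0 := by
      push_cast; rw [sub_eq_zero]; norm_cast; rw [mul_comm]; exact hABmul.symm
    have hBA : (B:ℂ) - (A:ℂ) = ((B - A : ℝ) : ℂ) := by push_cast; ring
    have hX : csqrt ((1:ℂ) - (A:ℂ)*(A:ℂ)) ≠ 0 := by
      rw [Ne, csqrt_eq_zero, h1A]
      norm_cast
      nlinarith
    have hY : csqrt ((B:ℂ) - (A:ℂ)) ≠ 0 := by
      rw [Ne, csqrt_eq_zero, hBA]
      norm_cast
      linarith
    -- continuity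
    have cont : ContinuousAt (phiTilde c) (A : ℂ) := by
      have hp : ContinuousAt (fun z : ℂ => csqrt (1 - (A:ℂ)*z)) (A:ℂ) := by
        apply contAt_csqrt_affine
        left; rw [h1A]; norm_num; nlinarith
      have hq : ContinuousAt (fun z : ℂ => csqrt (1 - (B:ℂ)*z)) (A:ℂ) := by
        apply contAt_csqrt_affine
        left; rw [h1B]; norm_num
      have hu : ContinuousAt (fun z : ℂ => csqrt ((B:ℂ) - z)) (A:ℂ) := by
        have := contAt_csqrt_affine (w := (B:ℂ)) (v := 1) (z := (A:ℂ))
          (by left; rw [one_mul, hBA]; norm_num; linarith)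
        simpa using this
      have hv : ContinuousAt (fun z : ℂ => csqrt ((A:ℂ) - z)) (A:ℂ) := by
        have := contAt_csqrt_affine (w := (A:ℂ)) (v := 1) (z := (A:ℂ))
          (by left; norm_num)
        simpa using this
      have hden1 : csqrt (1 - (A:ℂ)*(A:ℂ)) - csqrt (1 - (B:ℂ)*(A:ℂ)) ≠ 0 := by
        rw [h1B, csqrt_eq_zero.mpr rfl, sub_zero]; exact hX
      have hden2 : csqrt ((B:ℂ) - (A:ℂ)) - csqrt ((A:ℂ) - (A:ℂ)) ≠ 0 := by
        rw [sub_self, csqrt_eq_zero.mpr rfl, sub_zero]; exact hY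
      have hval1 : (csqrt (1 - (A:ℂ)*(A:ℂ)) + csqrt (1 - (B:ℂ)*(A:ℂ))) /
          (csqrt (1 - (A:ℂ)*(A:ℂ)) - csqrt (1 - (B:ℂ)*(A:ℂ))) = 1 := by
        rw [h1B, csqrt_eq_zero.mpr rfl, add_zero, sub_zero, div_self hX]
      have hval2 : (csqrt ((B:ℂ) - (A:ℂ)) + csqrt ((A:ℂ) - (A:ℂ))) /
          (csqrt ((B:ℂ) - (A:ℂ)) - csqrt ((A:ℂ) - (A:ℂ))) = 1 := by
        rw [sub_self, csqrt_eq_zero.mpr rfl, add_zero, sub_zero, div_self hY]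
      have hlog1 : ContinuousAt (fun z : ℂ => Complex.log
          ((csqrt (1 - (A:ℂ)*z) + csqrt (1 - (B:ℂ)*z)) /
           (csqrt (1 - (A:ℂ)*z) - csqrt (1 - (B:ℂ)*z)))) (A:ℂ) := by
        refine ContinuousAt.clog ((hp.add hq).div (hp.sub hq) hden1) ?_
        rw [hval1]
        simp [Complex.mem_slitPlane_iff]
      have hlog2 : ContinuousAt (fun z : ℂ => Complex.log
          ((csqrt ((B:ℂ) - z) + csqrt ((A:ℂ) - z)) /
           (csqrt ((B:ℂ) - z) - csqrt ((A:ℂ) - z)))) (A:ℂ) := by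
        refine ContinuousAt.clog ((hu.add hv).div (hu.sub hv) hden2) ?_
        rw [hval2]
        simp [Complex.mem_slitPlane_iff]
      exact (continuousAt_id.mul hlog1).sub hlog2
    have hval : phiTilde c (A : ℂ) = 0 := by
      unfold phiTilde
      rw [← hA, ← hB, h1B, sub_self]
      simp [csqrt_eq_zero.mpr rfl, div_self hX, div_self hY]
    have := cont.tendsto
    rw [hval] at this
    exact this.mono_left nhdsWithin_le_nhds
  ·
    set A := aconst c with hA
    set B := bconst c with hB
    set s := Real.sqrt c with hs
    have hs0 : 0 < s := sqrtc_pos hc0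
    have hs1 : s < 1 := sqrtc_lt_one hc0 hc1
    have hA0 : 0 < A := aconst_pos hc0 hc1
    have hA1 : A < 1 := aconst_lt_one hc0 hc1
    have hB1 : 1 < B := one_lt_bconst hc0 hc1
    have hABmul : A * B = 1 := mul_aconst_bconst hc0 hc1
    have hBA : 0 < B - A := by linarith
    -- domain facts
    have hdom_ne : ∀ z ∈ phiTildeDom c, z ≠ 0 := by
      rintro z hz rfl
      exact hz ⟨rfl, Or.inl le_rfl⟩
    ------------------------------------------------------------------
    -- Term 2 : continuity at 0
    ------------------------------------------------------------------
    set u := Real.sqrt A with hu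
    have hu0 : 0 < u := Real.sqrt_pos.mpr hA0
    have hu1 : u < 1 := by
      rw [hu, show (1:ℝ) = Real.sqrt 1 by simp]
      exact Real.sqrt_lt_sqrt hA0.le hA1
    have hu2 : u^2 = A := Real.sq_sqrt hA0.le
    have hsqrtB : Real.sqrt B = u⁻¹ := by
      rw [hB, bconst_eq_inv, Real.sqrt_inv, ← hA, ← hu]
    set r : ℝ := (u⁻¹ + u)/(u⁻¹ - u) with hrdef
    have hden_pos : 0 < u⁻¹ - u := by
      have : 1 < u⁻¹ := (one_lt_inv₀ hu0).mpr hu1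
      linarith
    have hr0 : 0 < r := by
      apply div_pos (by positivity) hden_pos
    have hr_eq : r = 1/s := by
      have e1 : r = (1 + A)/(1 - A) := by
        rw [hrdef, div_eq_div_iff hden_pos.ne' (by linarith : (1:ℝ) - A ≠ 0)]
        field_simp
        nlinarith [hu2]
      rw [e1, div_eq_div_iff (by linarith : (1:ℝ) - A ≠ 0) hs0.ne', hA, aconst]
      field_simp
      ring
    -- term 2: continuity at 0
    have hcsB : csqrt ((B:ℂ) - 0) = ((u⁻¹ : ℝ) : ℂ) := by
      rw [sub_zero, csqrt_ofReal (by linarith : (0:ℝ) ≤ B), hsqrtB]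
    have hcsA : csqrt ((A:ℂ) - 0) = ((u : ℝ) : ℂ) := by
      rw [sub_zero, csqrt_ofReal hA0.le, ← hu]
    have hval2 : (csqrt ((B:ℂ) - 0) + csqrt ((A:ℂ) - 0)) /
        (csqrt ((B:ℂ) - 0) - csqrt ((A:ℂ) - 0)) = ((r : ℝ) : ℂ) := by
      rw [hcsB, hcsA, hrdef]
      push_cast
      ring
    have hT2 : Tendsto (fun z : ℂ => Complex.log ((csqrt ((B:ℂ) - z) + csqrt ((A:ℂ) - z)) /
        (csqrt ((B:ℂ) - z) - csqrt ((A:ℂ) - z)))) (𝓝 0) (𝓝 ((Real.log r : ℝ) : ℂ)) := by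
      have hu' : ContinuousAt (fun z : ℂ => csqrt ((B:ℂ) - z)) 0 := by
        have := contAt_csqrt_affine (w := (B:ℂ)) (v := 1) (z := 0)
          (by left; norm_num; linarith)
        simpa using this
      have hv' : ContinuousAt (fun z : ℂ => csqrt ((A:ℂ) - z)) 0 := by
        have := contAt_csqrt_affine (w := (A:ℂ)) (v := 1) (z := 0)
          (by left; norm_num; linarith)
        simpa using this
      have hden : csqrt ((B:ℂ) - 0) - csqrt ((A:ℂ) - 0) ≠ 0 := by
        rw [hcsB, hcsA, ← Complex.ofReal_sub]
        norm_cast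
        linarith
      have hcont : ContinuousAt (fun z : ℂ => Complex.log ((csqrt ((B:ℂ) - z) + csqrt ((A:ℂ) - z)) /
          (csqrt ((B:ℂ) - z) - csqrt ((A:ℂ) - z)))) 0 := by
        refine ContinuousAt.clog ((hu'.add hv').div (hu'.sub hv') hden) ?_
        rw [hval2]
        rw [Complex.mem_slitPlane_iff]
        left
        simpa using hr0
      have := hcont.tendsto
      rw [hval2, ← Complex.ofReal_log hr0.le] at this
      exact this
    ------------------------------------------------------------------
    -- Term 1 : squeeze
    ------------------------------------------------------------------
    set C : ℝ := Real.log 9 + |Real.log (B - A)| + Real.pi with hC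
    have hcs1 : csqrt 1 = 1 := by rw [csqrt, Complex.one_cpow]
    have h1 : Tendsto (fun z : ℂ => csqrt (1 - (A:ℂ)*z)) (𝓝 0) (𝓝 1) := by
      have hcont : ContinuousAt (fun z : ℂ => csqrt (1 - (A:ℂ)*z)) 0 :=
        contAt_csqrt_affine (by left; norm_num)
      have := hcont.tendsto
      simpa [hcs1] using this
    have h2 : Tendsto (fun z : ℂ => csqrt (1 - (B:ℂ)*z)) (𝓝 0) (𝓝 1) := by
      have hcont : ContinuousAt (fun z : ℂ => csqrt (1 - (B:ℂ)*z)) 0 :=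
        contAt_csqrt_affine (by left; norm_num)
      have := hcont.tendsto
      simpa [hcs1] using this
    have hev1 : ∀ᶠ z in 𝓝 (0:ℂ), ‖csqrt (1 - (A:ℂ)*z) - 1‖ < 1/2 := by
      have : ∀ᶠ z in 𝓝 (0:ℂ), csqrt (1 - (A:ℂ)*z) ∈ Metric.ball (1:ℂ) (1/2) := h1 (Metric.ball_mem_nhds (1:ℂ) (by norm_num : (0:ℝ) < 1/2))
      simpa [Metric.mem_ball, dist_eq_norm] using this
    have hev2 : ∀ᶠ z in 𝓝 (0:ℂ), ‖csqrt (1 - (B:ℂ)*z) - 1‖ < 1/2 := by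
      have : ∀ᶠ z in 𝓝 (0:ℂ), csqrt (1 - (B:ℂ)*z) ∈ Metric.ball (1:ℂ) (1/2) := h2 (Metric.ball_mem_nhds (1:ℂ) (by norm_num : (0:ℝ) < 1/2))
      simpa [Metric.mem_ball, dist_eq_norm] using this
    have hbound : ∀ᶠ z in 𝓝[phiTildeDom c] (0:ℂ),
        ‖z * Complex.log ((csqrt (1 - (A:ℂ)*z) + csqrt (1 - (B:ℂ)*z)) /
          (csqrt (1 - (A:ℂ)*z) - csqrt (1 - (B:ℂ)*z)))‖ ≤ ‖z‖ * (C + |Real.log ‖z‖|) := by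
      filter_upwards [self_mem_nhdsWithin, hev1.filter_mono nhdsWithin_le_nhds,
        hev2.filter_mono nhdsWithin_le_nhds] with z hz hp1 hq1
      set p := csqrt (1 - (A:ℂ)*z) with hp
      set q := csqrt (1 - (B:ℂ)*z) with hq
      set N := p + q with hN
      set D := p - q with hD
      have hzne : z ≠ 0 := hdom_ne z hz
      have hzpos : 0 < ‖z‖ := norm_pos_iff.mpr hzne
      have hN2 : ‖N - 2‖ < 1 := by
        have e : N - 2 = (p - 1) + (q - 1) := by rw [hN]; ring
        rw [e]
        calc ‖(p-1) + (q-1)‖ ≤ ‖p-1‖ + ‖q-1‖ := norm_add_le _ _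
          _ < 1 := by linarith
      have hNge : 1 ≤ ‖N‖ := by
        have h := norm_sub_norm_le (2:ℂ) N
        rw [norm_sub_rev] at h
        simp only [Complex.norm_ofNat] at h
        linarith
      have hNle : ‖N‖ ≤ 3 := by
        have h : ‖N‖ ≤ ‖N - 2‖ + ‖(2:ℂ)‖ := by
          simpa using norm_add_le (N - 2) (2:ℂ)
        simp only [Complex.norm_ofNat] at h
        linarith
      have hNne : N ≠ 0 := by
        intro h; rw [h] at hNge; simp at hNge; linarith
      have hDne : D ≠ 0 := by
        intro h
        have hpq : p = q := sub_eq_zero.mp h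
        have := csqrt_inj (hp ▸ hq ▸ hpq)
        have h2 : ((B:ℂ) - (A:ℂ)) * z = 0 := by linear_combination this
        rcases mul_eq_zero.mp h2 with h3 | h3
        · have : (B:ℝ) = A := by
            have := sub_eq_zero.mp h3
            exact_mod_cast this
          linarith
        · exact hzne h3
      have hND : N * D = ((B - A : ℝ) : ℂ) * z := by
        have e : N * D = csqrt (1 - (A:ℂ)*z) * csqrt (1 - (A:ℂ)*z) -
            csqrt (1 - (B:ℂ)*z) * csqrt (1 - (B:ℂ)*z) := by rw [hN, hD, hp, hq]; ring
        rw [csqrt_mul_self, csqrt_mul_self] at e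
        rw [e]; push_cast; ring
      have habs : ‖N‖ * ‖D‖ = (B - A) * ‖z‖ := by
        rw [← norm_mul, hND, norm_mul, Complex.norm_real, Real.norm_eq_abs, abs_of_pos hBA]
      have hDpos : 0 < ‖D‖ := norm_pos_iff.mpr hDne
      have habsG : ‖N/D‖ = ‖N‖^2/((B - A) * ‖z‖) := by
        rw [norm_div, eq_div_iff (by positivity), ← habs]
        field_simp
      have hlog := norm_log_le (N/D)
      rw [habsG] at hlog
      have hbnd := real_log_bound hNge hNle hBA hzpos
      calc ‖z * Complex.log (N/D)‖ = ‖z‖ * ‖Complex.log (N/D)‖ := norm_mul _ _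
        _ ≤ ‖z‖ * (C + |Real.log ‖z‖|) := by
            apply mul_le_mul_of_nonneg_left _ (norm_nonneg z)
            rw [hC]
            linarith
    have htendsto : Tendsto (fun z : ℂ => ‖z‖ * (C + |Real.log ‖z‖|))
        (𝓝[phiTildeDom c] (0:ℂ)) (𝓝 0) := by
      have hnorm : Tendsto (fun z : ℂ => ‖z‖) (𝓝[phiTildeDom c] (0:ℂ)) (𝓝[>] (0:ℝ)) := by
        rw [tendsto_nhdsWithin_iff]
        constructor
        · have := (continuous_norm.tendsto (0:ℂ)).mono_left
            (nhdsWithin_le_nhds (s := phiTildeDom c))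
          simpa using this
        · filter_upwards [self_mem_nhdsWithin] with z hz
          exact Set.mem_Ioi.mpr (norm_pos_iff.mpr (hdom_ne z hz))
      exact (real_tendsto C).comp hnorm
    have hT1 : Tendsto (fun z : ℂ => z * Complex.log ((csqrt (1 - (A:ℂ)*z) + csqrt (1 - (B:ℂ)*z)) /
        (csqrt (1 - (A:ℂ)*z) - csqrt (1 - (B:ℂ)*z)))) (𝓝[phiTildeDom c] (0:ℂ)) (𝓝 0) :=
      squeeze_zero_norm' hbound htendsto
    -- assemble
    have hfinal := hT1.sub (hT2.mono_left nhdsWithin_le_nhds)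
    have hlogr : Real.log r = -(Real.log c / 2) := by
      rw [hr_eq, one_div, Real.log_inv, hs, Real.log_sqrt hc0.le]
    have : (0:ℂ) - ((Real.log r : ℝ) : ℂ) = (Real.log c : ℂ) / 2 := by
      rw [hlogr]; push_cast; ring
    rw [this] at hfinal
    exact hfinal
end

section
/- For real x, the boundary values of the real part of φ satisfy: if a < x < b then lim_{ε→0⁺} Re φ(x+iε) = 0 and lim_{ε→0⁺} Re φ(x−iε) = 0; if 0 < x < a then lim_{ε→0⁺} Re φ(x+iε) = φ̃(x) and lim_{ε→0⁺} Re φ(x−iε) = φ̃(x), where φ̃(x) is real for 0 < x < a; and if x > b then φ(x) is real and lim_{ε→0⁺} Re φ(x±iε) = φ(x). -/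
open Complex Finset Filter Topology

/-! ### Auxiliary lemmas -/

lemma aux_sqrtc_pos {c : ℝ} (h0 : 0 < c) : 0 < Real.sqrt c := Real.sqrt_pos.2 h0

lemma aux_sqrtc_lt_one {c : ℝ} (h0 : 0 < c) (h1 : c < 1) : Real.sqrt c < 1 := by
  rw [show (1:ℝ) = Real.sqrt 1 by simp]; exact Real.sqrt_lt_sqrt h0.le h1

lemma aconst_pos_s17 {c : ℝ} (h0 : 0 < c) (h1 : c < 1) : 0 < aconst c := by
  have hs0 := aux_sqrtc_pos h0; have hs1 := aux_sqrtc_lt_one h0 h1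
  exact div_pos (by linarith) (by linarith)

lemma aconst_lt_one_s17 {c : ℝ} (h0 : 0 < c) (h1 : c < 1) : aconst c < 1 := by
  have hs0 := aux_sqrtc_pos h0; have hs1 := aux_sqrtc_lt_one h0 h1
  rw [aconst, div_lt_one (by linarith)]; linarith

lemma aconst_mul_bconst {c : ℝ} (h0 : 0 < c) (h1 : c < 1) : aconst c * bconst c = 1 := by
  have hs0 := aux_sqrtc_pos h0; have hs1 := aux_sqrtc_lt_one h0 h1
  rw [aconst, bconst, div_mul_div_comm, mul_comm (1 - Real.sqrt c)]
  exact div_self (ne_of_gt (mul_pos (by linarith) (by linarith)))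

lemma one_lt_bconst_s17 {c : ℝ} (h0 : 0 < c) (h1 : c < 1) : 1 < bconst c := by
  have hs0 := aux_sqrtc_pos h0; have hs1 := aux_sqrtc_lt_one h0 h1
  rw [bconst, lt_div_iff₀ (by linarith)]; linarith

lemma csqrt_ofReal_nonneg {r : ℝ} (hr : 0 ≤ r) : csqrt (r : ℂ) = (Real.sqrt r : ℂ) := by
  rw [csqrt, show (1/2 : ℂ) = ((1/2 : ℝ) : ℂ) by norm_num, ← Complex.ofReal_cpow hr,
    ← Real.sqrt_eq_rpow]

lemma csqrt_tendsto_pos {l : Filter ℝ} {r : ℝ} (hr : 0 < r) {u : ℝ → ℂ}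
    (hu : Tendsto u l (𝓝 (r : ℂ))) :
    Tendsto (fun ε => csqrt (u ε)) l (𝓝 (Real.sqrt r : ℂ)) := by
  have hc : ContinuousAt (fun z : ℂ => z ^ (1/2 : ℂ)) (r : ℂ) :=
    continuousAt_cpow_const (by rw [Complex.mem_slitPlane_iff]; left; simpa using hr)
  have := hc.tendsto.comp hu
  simpa [csqrt, ← csqrt_ofReal_nonneg hr.le, Function.comp_def] using this

lemma exp_half_log {r : ℝ} (hr : 0 < r) :
    Complex.exp ((Real.log r : ℂ) * (1/2)) = (Real.sqrt r : ℂ) := by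
  rw [show ((Real.log r : ℂ) * (1/2)) = ((Real.log r / 2 : ℝ) : ℂ) by push_cast; ring,
    ← Complex.ofReal_exp, ← Real.log_sqrt hr.le, Real.exp_log (Real.sqrt_pos.2 hr)]

lemma exp_pi_half_I : Complex.exp ((Real.pi : ℂ) * I * (1/2)) = I := by
  rw [show ((Real.pi : ℂ) * I * (1/2)) = ((Real.pi/2 : ℝ) : ℂ) * I by push_cast; ring,
    Complex.exp_mul_I, ← Complex.ofReal_cos, ← Complex.ofReal_sin]
  simp [Real.cos_pi_div_two, Real.sin_pi_div_two]

lemma exp_neg_pi_half_I : Complex.exp (-((Real.pi : ℂ) * I) * (1/2)) = -I := by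
  rw [show (-((Real.pi : ℂ) * I) * (1/2)) = ((-(Real.pi/2) : ℝ) : ℂ) * I by push_cast; ring,
    Complex.exp_mul_I, ← Complex.ofReal_cos, ← Complex.ofReal_sin]
  simp [Real.cos_pi_div_two, Real.sin_pi_div_two]

lemma csqrt_tendsto_neg_upper {l : Filter ℝ} {r : ℝ} (hr : r < 0) {u : ℝ → ℂ}
    (hu : Tendsto u l (𝓝 (r : ℂ))) (him : ∀ᶠ ε in l, 0 ≤ (u ε).im) :
    Tendsto (fun ε => csqrt (u ε)) l (𝓝 ((Real.sqrt (-r) : ℂ) * I)) := by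
  have hlog : Tendsto (fun ε => Complex.log (u ε)) l
      (𝓝 ((Real.log (-r) : ℂ) + (Real.pi : ℂ) * I)) := by
    have h0 := Complex.tendsto_log_nhdsWithin_im_nonneg_of_re_neg_of_im_zero
      (z := (r : ℂ)) (by simpa using hr) (by simp)
    have h2 : Tendsto u l (𝓝[{z : ℂ | 0 ≤ z.im}] (r : ℂ)) :=
      tendsto_nhdsWithin_iff.2 ⟨hu, him⟩
    have := h0.comp h2
    simpa [Function.comp_def, Complex.norm_real, abs_of_neg hr] using this
  have hne : ∀ᶠ ε in l, u ε ≠ 0 := hu.eventually_ne (by simp [hr.ne])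
  have hT : Tendsto (fun ε => Complex.exp (Complex.log (u ε) * (1/2))) l
      (𝓝 (Complex.exp (((Real.log (-r) : ℂ) + (Real.pi : ℂ) * I) * (1/2)))) :=
    (Complex.continuous_exp.tendsto _).comp (hlog.mul_const _)
  have hval : Complex.exp (((Real.log (-r) : ℂ) + (Real.pi : ℂ) * I) * (1/2))
      = (Real.sqrt (-r) : ℂ) * I := by
    rw [add_mul, Complex.exp_add, exp_half_log (by linarith), exp_pi_half_I]
  rw [hval] at hT
  refine hT.congr' (hne.mono fun ε h => ?_)
  simp only [csqrt]; rw [Complex.cpow_def_of_ne_zero h]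

lemma csqrt_tendsto_neg_lower {l : Filter ℝ} {r : ℝ} (hr : r < 0) {u : ℝ → ℂ}
    (hu : Tendsto u l (𝓝 (r : ℂ))) (him : ∀ᶠ ε in l, (u ε).im < 0) :
    Tendsto (fun ε => csqrt (u ε)) l (𝓝 (-((Real.sqrt (-r) : ℂ) * I))) := by
  have hlog : Tendsto (fun ε => Complex.log (u ε)) l
      (𝓝 ((Real.log (-r) : ℂ) - (Real.pi : ℂ) * I)) := by
    have h0 := Complex.tendsto_log_nhdsWithin_im_neg_of_re_neg_of_im_zero
      (z := (r : ℂ)) (by simpa using hr) (by simp)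
    have h2 : Tendsto u l (𝓝[{z : ℂ | z.im < 0}] (r : ℂ)) :=
      tendsto_nhdsWithin_iff.2 ⟨hu, him⟩
    have := h0.comp h2
    simpa [Function.comp_def, Complex.norm_real, abs_of_neg hr] using this
  have hne : ∀ᶠ ε in l, u ε ≠ 0 := hu.eventually_ne (by simp [hr.ne])
  have hT : Tendsto (fun ε => Complex.exp (Complex.log (u ε) * (1/2))) l
      (𝓝 (Complex.exp (((Real.log (-r) : ℂ) - (Real.pi : ℂ) * I) * (1/2)))) :=
    (Complex.continuous_exp.tendsto _).comp (hlog.mul_const _)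
  have hval : Complex.exp (((Real.log (-r) : ℂ) - (Real.pi : ℂ) * I) * (1/2))
      = -((Real.sqrt (-r) : ℂ) * I) := by
    rw [sub_mul, Complex.exp_sub, exp_half_log (by linarith)]
    rw [show ((Real.pi : ℂ) * I * (1/2)) = -(-((Real.pi : ℂ) * I) * (1/2)) by ring,
      Complex.exp_neg, exp_neg_pi_half_I]
    field_simp
  rw [hval] at hT
  refine hT.congr' (hne.mono fun ε h => ?_)
  simp only [csqrt]; rw [Complex.cpow_def_of_ne_zero h]

lemma tendsto_affine (p k σ : ℝ) (u : ℝ → ℂ)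
    (hu : ∀ ε, u ε = (p : ℂ) + ((σ * k * ε : ℝ) : ℂ) * I) :
    Tendsto u (𝓝[>] (0:ℝ)) (𝓝 (p : ℂ)) := by
  have hcont : Continuous (fun ε : ℝ => (p : ℂ) + ((σ * k * ε : ℝ) : ℂ) * I) := by
    continuity
  have h := (hcont.tendsto 0).mono_left (nhdsWithin_le_nhds (s := Set.Ioi (0:ℝ)))
  simp only [mul_zero, Complex.ofReal_zero, zero_mul, add_zero] at h
  exact h.congr fun ε => (hu ε).symm

lemma csqrt_comp_pos {p : ℝ} (k σ : ℝ) (hp : 0 < p) (u : ℝ → ℂ)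
    (hu : ∀ ε, u ε = (p : ℂ) + ((σ * k * ε : ℝ) : ℂ) * I) :
    Tendsto (fun ε => csqrt (u ε)) (𝓝[>] (0:ℝ)) (𝓝 (Real.sqrt p : ℂ)) :=
  csqrt_tendsto_pos hp (tendsto_affine p k σ u hu)

lemma csqrt_comp_neg {p : ℝ} {k σ : ℝ} (hp : p < 0) (hk : 0 < k)
    (hσ : σ = 1 ∨ σ = -1) (u : ℝ → ℂ)
    (hu : ∀ ε, u ε = (p : ℂ) + ((σ * k * ε : ℝ) : ℂ) * I) :
    Tendsto (fun ε => csqrt (u ε)) (𝓝[>] (0:ℝ)) (𝓝 ((σ : ℂ) * (Real.sqrt (-p) : ℂ) * I)) := by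
  have htend := tendsto_affine p k σ u hu
  have him : ∀ ε, (u ε).im = σ * k * ε := fun ε => by rw [hu ε]; simp
  rcases hσ with h | h
  · subst h
    have := csqrt_tendsto_neg_upper hp htend ?_
    · simpa using this
    · filter_upwards [self_mem_nhdsWithin] with ε (hε : 0 < ε)
      rw [him ε]; positivity
  · subst h
    have := csqrt_tendsto_neg_lower hp htend ?_
    · rw [show ((-1 : ℝ) : ℂ) * (Real.sqrt (-p) : ℂ) * I = -((Real.sqrt (-p) : ℂ) * I) by
        push_cast; ring]
      exact this
    · filter_upwards [self_mem_nhdsWithin] with ε (hε : 0 < ε)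
      rw [him ε]; nlinarith

lemma ne_zero_of_re_pos {w : ℂ} (h : 0 < w.re) : w ≠ 0 := by
  intro h0; rw [h0] at h; simp at h

lemma skeleton (c x : ℝ) (z : ℝ → ℂ) (hre : ∀ ε, (z ε).re = x)
    (him : Tendsto (fun ε => (z ε).im) (𝓝[>] (0:ℝ)) (𝓝 0)) {L1 L2 : ℂ}
    (h1 : Tendsto (fun ε => (csqrt ((bconst c : ℂ) * z ε - 1) + csqrt ((aconst c : ℂ) * z ε - 1)) /
      (csqrt ((bconst c : ℂ) * z ε - 1) - csqrt ((aconst c : ℂ) * z ε - 1))) (𝓝[>] (0:ℝ)) (𝓝 L1))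
    (hL1 : L1 ≠ 0)
    (h2 : Tendsto (fun ε => (csqrt (z ε - (aconst c : ℂ)) + csqrt (z ε - (bconst c : ℂ))) /
      (csqrt (z ε - (aconst c : ℂ)) - csqrt (z ε - (bconst c : ℂ)))) (𝓝[>] (0:ℝ)) (𝓝 L2))
    (hL2 : L2 ≠ 0) :
    Tendsto (fun ε => (phiFun c (z ε)).re) (𝓝[>] (0:ℝ))
      (𝓝 (x * Real.log (‖L1‖) - Real.log (‖L2‖))) := by
  set w1 : ℝ → ℂ := fun ε => (csqrt ((bconst c : ℂ) * z ε - 1) + csqrt ((aconst c : ℂ) * z ε - 1)) /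
      (csqrt ((bconst c : ℂ) * z ε - 1) - csqrt ((aconst c : ℂ) * z ε - 1)) with hw1
  set w2 : ℝ → ℂ := fun ε => (csqrt (z ε - (aconst c : ℂ)) + csqrt (z ε - (bconst c : ℂ))) /
      (csqrt (z ε - (aconst c : ℂ)) - csqrt (z ε - (bconst c : ℂ))) with hw2
  have hA : Tendsto (fun ε => Real.log (‖(w1 ε)‖)) (𝓝[>] (0:ℝ))
      (𝓝 (Real.log (‖L1‖))) :=
    ((Real.continuousAt_log (norm_ne_zero_iff.mpr hL1)).tendsto).comp
      ((continuous_norm.tendsto L1).comp h1)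
  have hC : Tendsto (fun ε => Real.log (‖(w2 ε)‖)) (𝓝[>] (0:ℝ))
      (𝓝 (Real.log (‖L2‖))) :=
    ((Real.continuousAt_log (norm_ne_zero_iff.mpr hL2)).tendsto).comp
      ((continuous_norm.tendsto L2).comp h2)
  have hB : Tendsto (fun ε => (z ε).im * (w1 ε).arg) (𝓝[>] (0:ℝ)) (𝓝 0) := by
    apply squeeze_zero_norm' (a := fun ε => |(z ε).im| * Real.pi)
    · filter_upwards with ε
      rw [Real.norm_eq_abs, abs_mul]
      exact mul_le_mul_of_nonneg_left (Complex.abs_arg_le_pi _) (abs_nonneg _)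
    · have := (him.abs).mul_const Real.pi
      simpa using this
  have hcomb := ((hA.const_mul x).sub hB).sub hC
  rw [show x * Real.log (‖L1‖) - 0 - Real.log (‖L2‖)
      = x * Real.log (‖L1‖) - Real.log (‖L2‖) by ring] at hcomb
  refine hcomb.congr fun ε => ?_
  show x * Real.log (‖(w1 ε)‖) - (z ε).im * (w1 ε).arg
      - Real.log (‖(w2 ε)‖) = _
  rw [phiFun]
  simp only [Complex.sub_re, Complex.mul_re, Complex.log_re, Complex.log_im, hre ε, ← hw1, ← hw2]
  rfl

lemma re_mix_add (P s q : ℝ) : ((P:ℂ) + (s:ℂ)*(q:ℂ)*I).re = P := by simp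

lemma re_mix_sub (P s q : ℝ) : ((P:ℂ) - (s:ℂ)*(q:ℂ)*I).re = P := by simp

lemma tendsto_ratio_conj (P Q σ : ℝ) (hP : 0 < P) {f g : ℝ → ℂ}
    (hf : Tendsto f (𝓝[>] (0:ℝ)) (𝓝 (P:ℂ)))
    (hg : Tendsto g (𝓝[>] (0:ℝ)) (𝓝 ((σ:ℂ)*(Q:ℂ)*I))) :
    ∃ L : ℂ, Tendsto (fun ε => (f ε + g ε)/(f ε - g ε)) (𝓝[>] (0:ℝ)) (𝓝 L) ∧ L ≠ 0 ∧
      ‖L‖ = 1 := by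
  have hden : ((P:ℂ) - (σ:ℂ)*(Q:ℂ)*I) ≠ 0 :=
    _root_.ne_zero_of_re_pos (by rw [re_mix_sub]; exact hP)
  have hnum : ((P:ℂ) + (σ:ℂ)*(Q:ℂ)*I) ≠ 0 :=
    _root_.ne_zero_of_re_pos (by rw [re_mix_add]; exact hP)
  refine ⟨((P:ℂ) + (σ:ℂ)*(Q:ℂ)*I) / ((P:ℂ) - (σ:ℂ)*(Q:ℂ)*I), ?_, div_ne_zero hnum hden, ?_⟩
  · exact (hf.add hg).div (hf.sub hg) hden
  · have hconj : ((P:ℂ) - (σ:ℂ)*(Q:ℂ)*I) = (starRingEnd ℂ) ((P:ℂ) + (σ:ℂ)*(Q:ℂ)*I) := by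
      simp [Complex.conj_ofReal]; ring
    rw [norm_div, hconj, Complex.norm_conj, div_self (norm_ne_zero_iff.mpr hnum)]

lemma tendsto_ratio_real (A B : ℝ) {v : ℂ} (hv : v ≠ 0) (hAB : A ≠ B) (hABne : A + B ≠ 0)
    {f g : ℝ → ℂ}
    (hf : Tendsto f (𝓝[>] (0:ℝ)) (𝓝 (v * (A:ℂ))))
    (hg : Tendsto g (𝓝[>] (0:ℝ)) (𝓝 (v * (B:ℂ)))) :
    Tendsto (fun ε => (f ε + g ε)/(f ε - g ε)) (𝓝[>] (0:ℝ))
      (𝓝 (((A+B)/(A-B) : ℝ) : ℂ)) := by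
  have hABC : ((A:ℂ) - (B:ℂ)) ≠ 0 := by
    rw [← Complex.ofReal_sub]; exact_mod_cast sub_ne_zero.2 hAB
  have hden : v * (A:ℂ) - v * (B:ℂ) ≠ 0 := by
    rw [← mul_sub]; exact mul_ne_zero hv hABC
  have h := (hf.add hg).div (hf.sub hg) hden
  have hval : (v * (A:ℂ) + v * (B:ℂ)) / (v * (A:ℂ) - v * (B:ℂ))
      = (((A+B)/(A-B) : ℝ) : ℂ) := by
    rw [← mul_add, ← mul_sub, mul_div_mul_left _ _ hv]
    push_cast; ring
  rwa [hval] at h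

lemma ratio_eval (t1 t2 : ℝ) (h2 : 0 ≤ t2) (hlt : t2 < t1) :
    (csqrt ((t1:ℝ) : ℂ) + csqrt ((t2:ℝ) : ℂ)) / (csqrt ((t1:ℝ) : ℂ) - csqrt ((t2:ℝ) : ℂ))
      = (((Real.sqrt t1 + Real.sqrt t2)/(Real.sqrt t1 - Real.sqrt t2) : ℝ) : ℂ) := by
  rw [csqrt_ofReal_nonneg (le_trans h2 hlt.le), csqrt_ofReal_nonneg h2]
  push_cast; ring

lemma phiTilde_eval (c x : ℝ) (h1 : 0 ≤ 1 - bconst c * x) (h2 : 1 - bconst c * x < 1 - aconst c * x)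
    (h3 : 0 ≤ aconst c - x) (h4 : aconst c - x < bconst c - x) :
    phiTilde c (x : ℂ) =
      ((x * Real.log ((Real.sqrt (1 - aconst c * x) + Real.sqrt (1 - bconst c * x)) /
          (Real.sqrt (1 - aconst c * x) - Real.sqrt (1 - bconst c * x))) -
        Real.log ((Real.sqrt (bconst c - x) + Real.sqrt (aconst c - x)) /
          (Real.sqrt (bconst c - x) - Real.sqrt (aconst c - x))) : ℝ) : ℂ) := by
  have hs1 : Real.sqrt (1 - bconst c * x) < Real.sqrt (1 - aconst c * x) :=
    Real.sqrt_lt_sqrt h1 h2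
  have hs1' : 0 ≤ Real.sqrt (1 - bconst c * x) := Real.sqrt_nonneg _
  have hs2 : Real.sqrt (aconst c - x) < Real.sqrt (bconst c - x) := Real.sqrt_lt_sqrt h3 h4
  have hs2' : 0 ≤ Real.sqrt (aconst c - x) := Real.sqrt_nonneg _
  have hpos1 : 0 < (Real.sqrt (1 - aconst c * x) + Real.sqrt (1 - bconst c * x)) /
      (Real.sqrt (1 - aconst c * x) - Real.sqrt (1 - bconst c * x)) :=
    div_pos (by linarith) (by linarith)
  have hpos2 : 0 < (Real.sqrt (bconst c - x) + Real.sqrt (aconst c - x)) /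
      (Real.sqrt (bconst c - x) - Real.sqrt (aconst c - x)) :=
    div_pos (by linarith) (by linarith)
  rw [phiTilde,
    show (1 : ℂ) - (aconst c : ℂ) * (x:ℂ) = ((1 - aconst c * x : ℝ) : ℂ) by push_cast; ring,
    show (1 : ℂ) - (bconst c : ℂ) * (x:ℂ) = ((1 - bconst c * x : ℝ) : ℂ) by push_cast; ring,
    show (bconst c : ℂ) - (x:ℂ) = ((bconst c - x : ℝ) : ℂ) by push_cast; ring,
    show (aconst c : ℂ) - (x:ℂ) = ((aconst c - x : ℝ) : ℂ) by push_cast; ring,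
    ratio_eval _ _ h1 h2, ratio_eval _ _ h3 h4,
    ← Complex.ofReal_log hpos1.le, ← Complex.ofReal_log hpos2.le]
  push_cast; ring

lemma phiFun_eval (c x : ℝ) (h1 : 0 ≤ aconst c * x - 1) (h2 : aconst c * x - 1 < bconst c * x - 1)
    (h3 : 0 ≤ x - bconst c) (h4 : x - bconst c < x - aconst c) :
    phiFun c (x : ℂ) =
      ((x * Real.log ((Real.sqrt (bconst c * x - 1) + Real.sqrt (aconst c * x - 1)) /
          (Real.sqrt (bconst c * x - 1) - Real.sqrt (aconst c * x - 1))) -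
        Real.log ((Real.sqrt (x - aconst c) + Real.sqrt (x - bconst c)) /
          (Real.sqrt (x - aconst c) - Real.sqrt (x - bconst c))) : ℝ) : ℂ) := by
  have hs1 : Real.sqrt (aconst c * x - 1) < Real.sqrt (bconst c * x - 1) :=
    Real.sqrt_lt_sqrt h1 h2
  have hs1' : 0 ≤ Real.sqrt (aconst c * x - 1) := Real.sqrt_nonneg _
  have hs2 : Real.sqrt (x - bconst c) < Real.sqrt (x - aconst c) := Real.sqrt_lt_sqrt h3 h4
  have hs2' : 0 ≤ Real.sqrt (x - bconst c) := Real.sqrt_nonneg _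
  have hpos1 : 0 < (Real.sqrt (bconst c * x - 1) + Real.sqrt (aconst c * x - 1)) /
      (Real.sqrt (bconst c * x - 1) - Real.sqrt (aconst c * x - 1)) :=
    div_pos (by linarith) (by linarith)
  have hpos2 : 0 < (Real.sqrt (x - aconst c) + Real.sqrt (x - bconst c)) /
      (Real.sqrt (x - aconst c) - Real.sqrt (x - bconst c)) :=
    div_pos (by linarith) (by linarith)
  rw [phiFun,
    show (bconst c : ℂ) * (x:ℂ) - 1 = ((bconst c * x - 1 : ℝ) : ℂ) by push_cast; ring,
    show (aconst c : ℂ) * (x:ℂ) - 1 = ((aconst c * x - 1 : ℝ) : ℂ) by push_cast; ring,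
    show (x:ℂ) - (aconst c : ℂ) = ((x - aconst c : ℝ) : ℂ) by push_cast; ring,
    show (x:ℂ) - (bconst c : ℂ) = ((x - bconst c : ℝ) : ℂ) by push_cast; ring,
    ratio_eval _ _ h1 h2, ratio_eval _ _ h3 h4,
    ← Complex.ofReal_log hpos1.le, ← Complex.ofReal_log hpos2.le]
  push_cast; ring

lemma zfun_im_tendsto (x σ : ℝ) :
    Tendsto (fun ε : ℝ => (((x:ℂ) + (σ:ℂ) * (ε:ℂ) * I)).im) (𝓝[>] (0:ℝ)) (𝓝 0) := by
  have h : Tendsto (fun ε : ℝ => σ * ε) (𝓝 (0:ℝ)) (𝓝 (σ * 0)) :=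
    (continuous_const.mul continuous_id).tendsto 0
  rw [mul_zero] at h
  have h2 := h.mono_left (nhdsWithin_le_nhds (s := Set.Ioi (0:ℝ)))
  refine h2.congr fun ε => ?_
  simp

lemma case_mid (c x σ : ℝ) (h0 : 0 < c) (h1 : c < 1) (hσ : σ = 1 ∨ σ = -1)
    (hax : aconst c < x) (hxb : x < bconst c) :
    Tendsto (fun ε : ℝ => (phiFun c ((x:ℂ) + (σ:ℂ) * (ε:ℂ) * I)).re) (𝓝[>] (0:ℝ)) (𝓝 0) := by
  have ha0 := aconst_pos_s17 h0 h1
  have hb1 := one_lt_bconst_s17 h0 h1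
  have hab := aconst_mul_bconst h0 h1
  set z : ℝ → ℂ := fun ε => (x:ℂ) + (σ:ℂ) * (ε:ℂ) * I with hz
  have hp1 : 0 < bconst c * x - 1 := by nlinarith
  have hq1 : aconst c * x - 1 < 0 := by nlinarith
  have hp2 : 0 < x - aconst c := by linarith
  have hq2 : x - bconst c < 0 := by linarith
  have hf1 : Tendsto (fun ε => csqrt ((bconst c : ℂ) * z ε - 1)) (𝓝[>] (0:ℝ))
      (𝓝 (Real.sqrt (bconst c * x - 1) : ℂ)) :=
    csqrt_comp_pos (bconst c) σ hp1 _ (fun ε => by rw [hz]; push_cast; ring)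
  have hg1 : Tendsto (fun ε => csqrt ((aconst c : ℂ) * z ε - 1)) (𝓝[>] (0:ℝ))
      (𝓝 ((σ:ℂ) * (Real.sqrt (-(aconst c * x - 1)) : ℂ) * I)) :=
    csqrt_comp_neg hq1 ha0 hσ _ (fun ε => by rw [hz]; push_cast; ring)
  have hf2 : Tendsto (fun ε => csqrt (z ε - (aconst c : ℂ))) (𝓝[>] (0:ℝ))
      (𝓝 (Real.sqrt (x - aconst c) : ℂ)) :=
    csqrt_comp_pos 1 σ hp2 _ (fun ε => by rw [hz]; push_cast; ring)
  have hg2 : Tendsto (fun ε => csqrt (z ε - (bconst c : ℂ))) (𝓝[>] (0:ℝ))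
      (𝓝 ((σ:ℂ) * (Real.sqrt (-(x - bconst c)) : ℂ) * I)) :=
    csqrt_comp_neg hq2 one_pos hσ _ (fun ε => by rw [hz]; push_cast; ring)
  obtain ⟨L1, hL1t, hL1ne, hL1abs⟩ :=
    tendsto_ratio_conj _ _ σ (Real.sqrt_pos.2 hp1) hf1 hg1
  obtain ⟨L2, hL2t, hL2ne, hL2abs⟩ :=
    tendsto_ratio_conj _ _ σ (Real.sqrt_pos.2 hp2) hf2 hg2
  have := skeleton c x z (fun ε => by simp [hz]) (zfun_im_tendsto x σ) hL1t hL1ne hL2t hL2ne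
  rw [hL1abs, hL2abs, Real.log_one, mul_zero, sub_zero] at this
  exact this

lemma case_high (c x σ : ℝ) (h0 : 0 < c) (h1 : c < 1) (hσ : σ = 1 ∨ σ = -1)
    (hbx : bconst c < x) :
    Tendsto (fun ε : ℝ => (phiFun c ((x:ℂ) + (σ:ℂ) * (ε:ℂ) * I)).re) (𝓝[>] (0:ℝ))
      (𝓝 ((phiFun c (x:ℂ)).re)) := by
  have ha0 := aconst_pos_s17 h0 h1
  have hb1 := one_lt_bconst_s17 h0 h1
  have hab := aconst_mul_bconst h0 h1
  set z : ℝ → ℂ := fun ε => (x:ℂ) + (σ:ℂ) * (ε:ℂ) * I with hz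
  have hp1 : 0 < bconst c * x - 1 := by nlinarith
  have hq1 : 0 < aconst c * x - 1 := by nlinarith
  have hq1lt : aconst c * x - 1 < bconst c * x - 1 := by nlinarith
  have hp2 : 0 < x - aconst c := by nlinarith
  have hq2 : 0 < x - bconst c := by linarith
  have hq2lt : x - bconst c < x - aconst c := by nlinarith
  have hf1 : Tendsto (fun ε => csqrt ((bconst c : ℂ) * z ε - 1)) (𝓝[>] (0:ℝ))
      (𝓝 (Real.sqrt (bconst c * x - 1) : ℂ)) :=
    csqrt_comp_pos (bconst c) σ hp1 _ (fun ε => by rw [hz]; push_cast; ring)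
  have hg1 : Tendsto (fun ε => csqrt ((aconst c : ℂ) * z ε - 1)) (𝓝[>] (0:ℝ))
      (𝓝 (Real.sqrt (aconst c * x - 1) : ℂ)) :=
    csqrt_comp_pos (aconst c) σ hq1 _ (fun ε => by rw [hz]; push_cast; ring)
  have hf2 : Tendsto (fun ε => csqrt (z ε - (aconst c : ℂ))) (𝓝[>] (0:ℝ))
      (𝓝 (Real.sqrt (x - aconst c) : ℂ)) :=
    csqrt_comp_pos 1 σ hp2 _ (fun ε => by rw [hz]; push_cast; ring)
  have hg2 : Tendsto (fun ε => csqrt (z ε - (bconst c : ℂ))) (𝓝[>] (0:ℝ))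
      (𝓝 (Real.sqrt (x - bconst c) : ℂ)) :=
    csqrt_comp_pos 1 σ hq2 _ (fun ε => by rw [hz]; push_cast; ring)
  have hs1 : Real.sqrt (aconst c * x - 1) < Real.sqrt (bconst c * x - 1) :=
    Real.sqrt_lt_sqrt hq1.le hq1lt
  have hs1'' : 0 < Real.sqrt (aconst c * x - 1) := Real.sqrt_pos.2 hq1
  have hs2 : Real.sqrt (x - bconst c) < Real.sqrt (x - aconst c) :=
    Real.sqrt_lt_sqrt hq2.le hq2lt
  have hs2'' : 0 < Real.sqrt (x - bconst c) := Real.sqrt_pos.2 hq2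
  have hL1t := tendsto_ratio_real (Real.sqrt (bconst c * x - 1)) (Real.sqrt (aconst c * x - 1))
    (v := (1:ℂ)) one_ne_zero (ne_of_gt hs1) (by positivity)
    (by rw [one_mul]; exact hf1) (by rw [one_mul]; exact hg1)
  have hL2t := tendsto_ratio_real (Real.sqrt (x - aconst c)) (Real.sqrt (x - bconst c))
    (v := (1:ℂ)) one_ne_zero (ne_of_gt hs2) (by positivity)
    (by rw [one_mul]; exact hf2) (by rw [one_mul]; exact hg2)
  have ht1pos : 0 < (Real.sqrt (bconst c * x - 1) + Real.sqrt (aconst c * x - 1)) /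
      (Real.sqrt (bconst c * x - 1) - Real.sqrt (aconst c * x - 1)) :=
    div_pos (by linarith) (by linarith)
  have ht2pos : 0 < (Real.sqrt (x - aconst c) + Real.sqrt (x - bconst c)) /
      (Real.sqrt (x - aconst c) - Real.sqrt (x - bconst c)) :=
    div_pos (by linarith) (by linarith)
  have hL1ne : (((Real.sqrt (bconst c * x - 1) + Real.sqrt (aconst c * x - 1)) /
      (Real.sqrt (bconst c * x - 1) - Real.sqrt (aconst c * x - 1)) : ℝ) : ℂ) ≠ 0 := by
    exact_mod_cast ne_of_gt ht1pos
  have hL2ne : (((Real.sqrt (x - aconst c) + Real.sqrt (x - bconst c)) /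
      (Real.sqrt (x - aconst c) - Real.sqrt (x - bconst c)) : ℝ) : ℂ) ≠ 0 := by
    exact_mod_cast ne_of_gt ht2pos
  have key := skeleton c x z (fun ε => by simp [hz]) (zfun_im_tendsto x σ) hL1t hL1ne hL2t hL2ne
  rw [Complex.norm_real, Complex.norm_real, Real.norm_eq_abs, Real.norm_eq_abs, Real.log_abs, Real.log_abs] at key
  rw [phiFun_eval c x hq1.le hq1lt hq2.le hq2lt, Complex.ofReal_re]
  exact key

lemma case_low (c x σ : ℝ) (h0 : 0 < c) (h1 : c < 1) (hσ : σ = 1 ∨ σ = -1)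
    (hx0 : 0 < x) (hxa : x < aconst c) :
    Tendsto (fun ε : ℝ => (phiFun c ((x:ℂ) + (σ:ℂ) * (ε:ℂ) * I)).re) (𝓝[>] (0:ℝ))
      (𝓝 ((phiTilde c (x:ℂ)).re)) := by
  have ha0 := aconst_pos_s17 h0 h1
  have ha1 := aconst_lt_one_s17 h0 h1
  have hb1 := one_lt_bconst_s17 h0 h1
  have hab := aconst_mul_bconst h0 h1
  set z : ℝ → ℂ := fun ε => (x:ℂ) + (σ:ℂ) * (ε:ℂ) * I with hz
  have hq1 : bconst c * x - 1 < 0 := by nlinarith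
  have hq1' : aconst c * x - 1 < 0 := by nlinarith
  have hq2 : x - aconst c < 0 := by linarith
  have hq2' : x - bconst c < 0 := by nlinarith
  have hσI : ((σ:ℂ) * I) ≠ 0 := by
    apply mul_ne_zero _ Complex.I_ne_zero
    rcases hσ with h | h <;> simp [h]
  have hf1 : Tendsto (fun ε => csqrt ((bconst c : ℂ) * z ε - 1)) (𝓝[>] (0:ℝ))
      (𝓝 ((σ:ℂ) * (Real.sqrt (1 - bconst c * x) : ℂ) * I)) := by
    have := csqrt_comp_neg hq1 (by linarith : (0:ℝ) < bconst c) hσ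
      (fun ε => (bconst c : ℂ) * z ε - 1) (fun ε => by rw [hz]; push_cast; ring)
    rwa [show -(bconst c * x - 1) = 1 - bconst c * x by ring] at this
  have hg1 : Tendsto (fun ε => csqrt ((aconst c : ℂ) * z ε - 1)) (𝓝[>] (0:ℝ))
      (𝓝 ((σ:ℂ) * (Real.sqrt (1 - aconst c * x) : ℂ) * I)) := by
    have := csqrt_comp_neg hq1' ha0 hσ
      (fun ε => (aconst c : ℂ) * z ε - 1) (fun ε => by rw [hz]; push_cast; ring)
    rwa [show -(aconst c * x - 1) = 1 - aconst c * x by ring] at this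
  have hf2 : Tendsto (fun ε => csqrt (z ε - (aconst c : ℂ))) (𝓝[>] (0:ℝ))
      (𝓝 ((σ:ℂ) * (Real.sqrt (aconst c - x) : ℂ) * I)) := by
    have := csqrt_comp_neg hq2 one_pos hσ
      (fun ε => z ε - (aconst c : ℂ)) (fun ε => by rw [hz]; push_cast; ring)
    rwa [show -(x - aconst c) = aconst c - x by ring] at this
  have hg2 : Tendsto (fun ε => csqrt (z ε - (bconst c : ℂ))) (𝓝[>] (0:ℝ))
      (𝓝 ((σ:ℂ) * (Real.sqrt (bconst c - x) : ℂ) * I)) := by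
    have := csqrt_comp_neg hq2' one_pos hσ
      (fun ε => z ε - (bconst c : ℂ)) (fun ε => by rw [hz]; push_cast; ring)
    rwa [show -(x - bconst c) = bconst c - x by ring] at this
  -- abbreviations
  set α : ℝ := Real.sqrt (1 - aconst c * x) with hα
  set β : ℝ := Real.sqrt (1 - bconst c * x) with hβ
  set α₂ : ℝ := Real.sqrt (aconst c - x) with hα₂
  set β₂ : ℝ := Real.sqrt (bconst c - x) with hβ₂
  have hβα : β < α := Real.sqrt_lt_sqrt (by linarith) (by nlinarith)
  have hβ0 : 0 ≤ β := Real.sqrt_nonneg _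
  have hαβ₂ : α₂ < β₂ := Real.sqrt_lt_sqrt (by linarith) (by linarith)
  have hα₂0 : 0 ≤ α₂ := Real.sqrt_nonneg _
  have hL1t := tendsto_ratio_real β α (v := (σ:ℂ) * I) hσI (ne_of_lt hβα) (by linarith)
    (by rw [show ((σ:ℂ) * I) * (β:ℂ) = (σ:ℂ) * (β:ℂ) * I by ring]; exact hf1)
    (by rw [show ((σ:ℂ) * I) * (α:ℂ) = (σ:ℂ) * (α:ℂ) * I by ring]; exact hg1)
  have hL2t := tendsto_ratio_real α₂ β₂ (v := (σ:ℂ) * I) hσI (ne_of_lt hαβ₂) (by linarith)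
    (by rw [show ((σ:ℂ) * I) * (α₂:ℂ) = (σ:ℂ) * (α₂:ℂ) * I by ring]; exact hf2)
    (by rw [show ((σ:ℂ) * I) * (β₂:ℂ) = (σ:ℂ) * (β₂:ℂ) * I by ring]; exact hg2)
  have ht1ne : (β + α) / (β - α) ≠ 0 :=
    div_ne_zero (by linarith) (by intro h; apply ne_of_lt hβα; linarith [sub_eq_zero.1 h])
  have ht2ne : (α₂ + β₂) / (α₂ - β₂) ≠ 0 :=
    div_ne_zero (by linarith) (by intro h; apply ne_of_lt hαβ₂; linarith [sub_eq_zero.1 h])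
  have hL1ne : (((β + α) / (β - α) : ℝ) : ℂ) ≠ 0 := by exact_mod_cast ht1ne
  have hL2ne : (((α₂ + β₂) / (α₂ - β₂) : ℝ) : ℂ) ≠ 0 := by exact_mod_cast ht2ne
  have key := skeleton c x z (fun ε => by simp [hz]) (zfun_im_tendsto x σ) hL1t hL1ne hL2t hL2ne
  rw [Complex.norm_real, Complex.norm_real, Real.norm_eq_abs, Real.norm_eq_abs, Real.log_abs, Real.log_abs] at key
  rw [phiTilde_eval c x (by linarith) (by nlinarith) (by linarith) (by linarith),
    Complex.ofReal_re, ← hα, ← hβ, ← hα₂, ← hβ₂,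
    show (α + β) / (α - β) = -((β + α) / (β - α)) by
      rw [show α - β = -(β - α) by ring, show α + β = β + α by ring, div_neg],
    show (β₂ + α₂) / (β₂ - α₂) = -((α₂ + β₂) / (α₂ - β₂)) by
      rw [show β₂ - α₂ = -(α₂ - β₂) by ring, show β₂ + α₂ = α₂ + β₂ by ring, div_neg],
    Real.log_neg_eq_log, Real.log_neg_eq_log]
  exact key

lemma phiTilde_im_zero (c x : ℝ) (h0 : 0 < c) (h1 : c < 1) (hx0 : 0 < x) (hxa : x < aconst c) :
    (phiTilde c (x:ℂ)).im = 0 := by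
  have ha0 := aconst_pos_s17 h0 h1
  have ha1 := aconst_lt_one_s17 h0 h1
  have hb1 := one_lt_bconst_s17 h0 h1
  have hab := aconst_mul_bconst h0 h1
  rw [phiTilde_eval c x (by nlinarith) (by nlinarith) (by linarith) (by linarith)]
  simp

lemma phiFun_im_zero (c x : ℝ) (h0 : 0 < c) (h1 : c < 1) (hbx : bconst c < x) :
    (phiFun c (x:ℂ)).im = 0 := by
  have ha0 := aconst_pos_s17 h0 h1
  have hb1 := one_lt_bconst_s17 h0 h1
  have hab := aconst_mul_bconst h0 h1
  have ha1 := aconst_lt_one_s17 h0 h1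
  rw [phiFun_eval c x (by nlinarith) (by nlinarith) (by linarith) (by nlinarith)]
  simp

/-- Boundary values of `Re φ` on the positive real axis from above and below. -/
theorem phiFun_boundary_re (c : ℝ) (hc0 : 0 < c) (hc1 : c < 1) :
    (∀ x : ℝ, aconst c < x → x < bconst c →
      Tendsto (fun ε : ℝ => (phiFun c ((x : ℂ) + (ε : ℂ) * Complex.I)).re)
        (𝓝[>] 0) (𝓝 0) ∧
      Tendsto (fun ε : ℝ => (phiFun c ((x : ℂ) - (ε : ℂ) * Complex.I)).re)
        (𝓝[>] 0) (𝓝 0)) ∧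
    (∀ x : ℝ, 0 < x → x < aconst c →
      (phiTilde c (x : ℂ)).im = 0 ∧
      Tendsto (fun ε : ℝ => (phiFun c ((x : ℂ) + (ε : ℂ) * Complex.I)).re)
        (𝓝[>] 0) (𝓝 ((phiTilde c (x : ℂ)).re)) ∧
      Tendsto (fun ε : ℝ => (phiFun c ((x : ℂ) - (ε : ℂ) * Complex.I)).re)
        (𝓝[>] 0) (𝓝 ((phiTilde c (x : ℂ)).re))) ∧
    (∀ x : ℝ, bconst c < x →
      (phiFun c (x : ℂ)).im = 0 ∧
      Tendsto (fun ε : ℝ => (phiFun c ((x : ℂ) + (ε : ℂ) * Complex.I)).re)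
        (𝓝[>] 0) (𝓝 ((phiFun c (x : ℂ)).re)) ∧
      Tendsto (fun ε : ℝ => (phiFun c ((x : ℂ) - (ε : ℂ) * Complex.I)).re)
        (𝓝[>] 0) (𝓝 ((phiFun c (x : ℂ)).re))) := by
  refine ⟨fun x hax hxb => ⟨?_, ?_⟩, fun x hx0 hxa =>
    ⟨phiTilde_im_zero c x hc0 hc1 hx0 hxa, ?_, ?_⟩, fun x hbx =>
    ⟨phiFun_im_zero c x hc0 hc1 hbx, ?_, ?_⟩⟩
  · exact (case_mid c x 1 hc0 hc1 (Or.inl rfl) hax hxb).congr fun ε => by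
      rw [show (x:ℂ) + ((1:ℝ):ℂ) * (ε:ℂ) * I = (x:ℂ) + (ε:ℂ) * I by push_cast; ring]
  · exact (case_mid c x (-1) hc0 hc1 (Or.inr rfl) hax hxb).congr fun ε => by
      rw [show (x:ℂ) + ((-1:ℝ):ℂ) * (ε:ℂ) * I = (x:ℂ) - (ε:ℂ) * I by push_cast; ring]
  · exact (case_low c x 1 hc0 hc1 (Or.inl rfl) hx0 hxa).congr fun ε => by
      rw [show (x:ℂ) + ((1:ℝ):ℂ) * (ε:ℂ) * I = (x:ℂ) + (ε:ℂ) * I by push_cast; ring]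
  · exact (case_low c x (-1) hc0 hc1 (Or.inr rfl) hx0 hxa).congr fun ε => by
      rw [show (x:ℂ) + ((-1:ℝ):ℂ) * (ε:ℂ) * I = (x:ℂ) - (ε:ℂ) * I by push_cast; ring]
  · exact (case_high c x 1 hc0 hc1 (Or.inl rfl) hbx).congr fun ε => by
      rw [show (x:ℂ) + ((1:ℝ):ℂ) * (ε:ℂ) * I = (x:ℂ) + (ε:ℂ) * I by push_cast; ring]
  · exact (case_high c x (-1) hc0 hc1 (Or.inr rfl) hbx).congr fun ε => by
      rw [show (x:ℂ) + ((-1:ℝ):ℂ) * (ε:ℂ) * I = (x:ℂ) - (ε:ℂ) * I by push_cast; ring]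
end
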